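/- Let Γ be a maximal SKHM-consistent set of L_Khm formulas and M^c_Γ its canonical model. Given an action a = ⟨ψ',⊥,φ'⟩ ∈ Σ_Γ, if a is executable (has at least one a-successor) at every ψ-state w ∈ S^c, then U(ψ → ψ') ∈ Γ. -/

import Mathlib

/-- Formulas of the language L_Khm over a countable set of proposition
letters (represented by `ℕ`): `φ ::= p | ¬φ | (φ∧φ) | Khm(φ,φ,φ)`. -/
inductive Formula : Type
  | atom : ℕ → Formula
  | neg : Formula → Formula
  | and : Formula → Formula → Formula
  | khm : Formula → Formula → Formula → Formula
deriving DecidableEq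

namespace Formula

/-- The falsum `⊥`, as a standard abbreviation. -/
def falsum : Formula := and (atom 0) (neg (atom 0))

/-- The verum `⊤`. -/
def top : Formula := neg falsum

/-- Material implication, as a standard abbreviation. -/
def imp (φ ψ : Formula) : Formula := neg (and φ (neg ψ))

/-- Biimplication. -/
def biimp (φ ψ : Formula) : Formula := and (imp φ ψ) (imp ψ φ)

/-- The universal modality `Uφ := Khm(¬φ, ⊤, ⊥)`. -/
def U (φ : Formula) : Formula := khm (neg φ) top falsum

/-- Uniform substitution of formulas for proposition letters. -/
def subst (f : ℕ → Formula) : Formula → Formula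
  | atom n => f n
  | neg φ => neg (subst f φ)
  | and φ ψ => and (subst f φ) (subst f ψ)
  | khm φ χ ψ => khm (subst f φ) (subst f χ) (subst f ψ)

end Formula

/-- A model (ability map): a labelled transition system over action symbols `Act`,
with a set of states `S`, transitions `R`, and valuation `V`. -/
structure Model (Act : Type) where
  S : Type
  R : Act → S → S → Prop
  V : S → Set ℕ

namespace Model

variable {Act : Type} (M : Model Act)

/-- `M.bigStep σ s t` : `s →σ t`, i.e. `t` is reachable from `s` by executing the
sequence of actions `σ`. -/
def bigStep : List Act → M.S → M.S → Prop
  | [], s, t => s = t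
  | a :: σ, s, t => ∃ u, M.R a s u ∧ bigStep σ u t

/-- `σ = a₁⋯aₙ` is strongly executable at `s` if for each `0 ≤ k < n`,
`s →σ_k t` implies `t` has at least one `a_{k+1}`-successor. -/
def stronglyExec (σ : List Act) (s : M.S) : Prop :=
  ∀ k (h : k < σ.length) (t : M.S),
    M.bigStep (σ.take k) s t → ∃ u, M.R (σ.get ⟨k, h⟩) t u

/-- Satisfaction. `M.sat (Formula.khm ψ χ φ) s` holds iff there is `σ ∈ Act*`
such that for every `s'` with `M, s' ⊨ ψ`: `σ` is strongly `χ`-executable at `s'`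
(strongly executable, and all strictly intermediate states satisfy `χ`) and
`M, t ⊨ φ` for all `t` with `s' →σ t`. -/
def sat : Formula → M.S → Prop
  | .atom n, s => n ∈ M.V s
  | .neg φ, s => ¬ sat φ s
  | .and φ ψ, s => sat φ s ∧ sat ψ s
  | .khm ψ χ φ, s => ∃ σ : List Act, ∀ s', sat ψ s' →
      (M.stronglyExec σ s' ∧
        ∀ k, 0 < k → k < σ.length → ∀ t, M.bigStep (σ.take k) s' t → sat χ t) ∧
      (∀ t, M.bigStep σ s' t → sat φ t)

end Model

/-- A formula is valid (w.r.t. the class of all models over action symbols `Act`)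
if it is satisfied at every state of every model. -/
def Valid (Act : Type) (φ : Formula) : Prop :=
  ∀ M : Model Act, Nonempty M.S → ∀ s : M.S, M.sat φ s

/-- Boolean evaluation treating proposition letters and `Khm`-formulas as atoms. -/
def evalB (v : Formula → Bool) : Formula → Bool
  | .atom n => v (.atom n)
  | .neg φ => ! evalB v φ
  | .and φ ψ => evalB v φ && evalB v ψ
  | .khm ψ χ φ => v (.khm ψ χ φ)

/-- Propositional tautologies. -/
def Tautology (φ : Formula) : Prop := ∀ v, evalB v φ = true

open Formula in
/-- Derivability in the proof system SKHM. -/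
inductive Deriv : Formula → Prop
  | taut {φ} : Tautology φ → Deriv φ
  | distU (p q) : Deriv (((U p).and (U (p.imp q))).imp (U q))
  | tU (p) : Deriv ((U p).imp p)
  | fourKhmU (p o q) : Deriv ((khm p o q).imp (U (khm p o q)))
  | fiveKhmU (p o q) : Deriv ((neg (khm p o q)).imp (U (neg (khm p o q))))
  | empKhm (p q) : Deriv ((U (p.imp q)).imp (khm p falsum q))
  | compKhm (p o r q) :
      Deriv ((((khm p o r).and (khm r o q)).and (U (r.imp o))).imp (khm p o q))
  | oneKhm (p o q) :
      Deriv (((khm p o q).and (neg (khm p falsum q))).imp (khm p falsum o))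
  | uKhm (p' p o o' q q') :
      Deriv (((((U (p'.imp p)).and (U (o.imp o'))).and (U (q.imp q'))).and
        (khm p o q)).imp (khm p' o' q'))
  | mp {φ ψ} : Deriv (φ.imp ψ) → Deriv φ → Deriv ψ
  | necU {φ} : Deriv φ → Deriv (U φ)
  | sub {φ} (f : ℕ → Formula) : Deriv φ → Deriv (φ.subst f)

/-- Conjunction of a finite list of formulas. -/
def conjList : List Formula → Formula
  | [] => Formula.top
  | φ :: L => φ.and (conjList L)

/-- A set of formulas is SKHM-consistent if no finite conjunction of its
members has its negation derivable in SKHM. -/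
def ConsistentSet (Γ : Set Formula) : Prop :=
  ∀ L : List Formula, (∀ φ ∈ L, φ ∈ Γ) → ¬ Deriv (Formula.neg (conjList L))

/-- Maximal SKHM-consistent set. -/
def MCS (Γ : Set Formula) : Prop :=
  ConsistentSet Γ ∧ ∀ Δ, ConsistentSet Δ → Γ ⊆ Δ → Δ = Γ

/-- `Δ|Khm`: the positive `Khm`-formulas of `Δ`. -/
def khmPart (Δ : Set Formula) : Set Formula :=
  {θ ∈ Δ | ∃ ψ χ φ, θ = Formula.khm ψ χ φ}

/-- `Φ_Γ`: the set of all MCSs `Δ` with `Δ|Khm = Γ|Khm`. -/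
def PhiGamma (Γ : Set Formula) : Set (Set Formula) :=
  {Δ | MCS Δ ∧ khmPart Δ = khmPart Γ}

/-- Canonical action symbols: `⟨ψ,⊥,φ⟩` (`one ψ φ`) and `⟨χ^ψ,φ⟩` (`two χ ψ φ`). -/
inductive CanAct : Type
  | one : Formula → Formula → CanAct
  | two : Formula → Formula → Formula → CanAct
deriving DecidableEq

/-- The formula in the last component of a canonical action. -/
def CanAct.post : CanAct → Formula
  | .one _ φ => φ
  | .two _ _ φ => φ

/-- The canonical action set
`Σ_Γ = {⟨ψ,⊥,φ⟩ : Khm(ψ,⊥,φ) ∈ Γ} ∪ {⟨χ^ψ,φ⟩ : Khm(ψ,χ,φ) ∈ Γ, ¬Khm(ψ,⊥,φ) ∈ Γ}`. -/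
def SigmaGamma (Γ : Set Formula) : Set CanAct :=
  {a | (∃ ψ φ, a = CanAct.one ψ φ ∧ Formula.khm ψ Formula.falsum φ ∈ Γ) ∨
       (∃ χ ψ φ, a = CanAct.two χ ψ φ ∧ Formula.khm ψ χ φ ∈ Γ ∧
          Formula.neg (Formula.khm ψ Formula.falsum φ) ∈ Γ)}

/-- Canonical states: pairs `(Δ, χ^ψ)` (the marker `χ^ψ` is the pair `(χ, ψ)`)
with `χ ∈ Δ ∈ Φ_Γ`, and either `⟨χ^ψ,φ⟩ ∈ Σ_Γ` for some `φ`, or `⟨ψ,⊥,χ⟩ ∈ Σ_Γ`. -/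
def CanStates (Γ : Set Formula) : Set (Set Formula × Formula × Formula) :=
  {w | w.1 ∈ PhiGamma Γ ∧ w.2.1 ∈ w.1 ∧
       ((∃ φ, CanAct.two w.2.1 w.2.2 φ ∈ SigmaGamma Γ) ∨
        CanAct.one w.2.2 w.2.1 ∈ SigmaGamma Γ)}

/-- The canonical model `M^c_Γ` over the action set `Σ_Γ`. For a canonical state
`w`, `L(w) = w.1.1` and `R(w) = w.1.2`. -/
def canonicalModel (Γ : Set Formula) : Model {a : CanAct // a ∈ SigmaGamma Γ} where
  S := {w : Set Formula × Formula × Formula // w ∈ CanStates Γ}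
  R a w w' :=
    match a.1 with
    | CanAct.one ψ φ => ψ ∈ w.1.1 ∧ w'.1.2 = (φ, ψ)
    | CanAct.two χ ψ φ => w.1.2 = (χ, ψ) ∧ φ ∈ w'.1.1
  V w := {n | Formula.atom n ∈ w.1.1}

-- AUX START
open Formula

namespace SKHMAux

lemma evalB_falsum (v) : evalB v Formula.falsum = false := by
  simp [Formula.falsum, evalB]

lemma evalB_top (v) : evalB v Formula.top = true := by
  simp [Formula.top, evalB, evalB_falsum]

lemma evalB_imp (v) (φ ψ : Formula) :
    evalB v (φ.imp ψ) = (!evalB v φ || evalB v ψ) := by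
  simp [Formula.imp, evalB]

lemma dtaut {φ : Formula} (h : ∀ v, evalB v φ = true) : Deriv φ := Deriv.taut h

lemma d_imp_of (φ : Formula) {ψ : Formula} (h : Deriv ψ) : Deriv (φ.imp ψ) := by
  refine Deriv.mp (dtaut fun v => ?_) h
  simp only [evalB_imp, evalB]
  cases hb : evalB v ψ <;> cases ha : evalB v φ <;> simp [ha, hb]

lemma d_trans {a b c : Formula} (h1 : Deriv (a.imp b)) (h2 : Deriv (b.imp c)) :
    Deriv (a.imp c) := by
  refine Deriv.mp (Deriv.mp (dtaut fun v => ?_) h1) h2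
  simp only [evalB_imp, evalB]
  cases evalB v a <;> cases evalB v b <;> cases evalB v c <;> rfl

lemma d_mt {a b : Formula} (h1 : Deriv (a.imp b)) (h2 : Deriv b.neg) :
    Deriv a.neg := by
  refine Deriv.mp (Deriv.mp (dtaut fun v => ?_) h1) h2
  simp only [evalB_imp, evalB]
  cases evalB v a <;> cases evalB v b <;> rfl

lemma d_conj_head (x : Formula) (L : List Formula) :
    Deriv ((conjList (x :: L)).imp x) := by
  refine dtaut fun v => ?_
  simp only [conjList, evalB_imp, evalB]
  cases evalB v x <;> cases evalB v (conjList L) <;> rfl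

lemma d_conj_tail (x : Formula) (L : List Formula) :
    Deriv ((conjList (x :: L)).imp (conjList L)) := by
  refine dtaut fun v => ?_
  simp only [conjList, evalB_imp, evalB]
  cases evalB v x <;> cases evalB v (conjList L) <;> rfl

lemma d_conj_of_mem {x : Formula} {L : List Formula} (h : x ∈ L) :
    Deriv ((conjList L).imp x) := by
  induction L with
  | nil => cases h
  | cons y L ih =>
    rcases List.mem_cons.mp h with rfl | h
    · exact d_conj_head _ _
    · exact d_trans (d_conj_tail _ _) (ih h)

lemma d_imp_and {m a b : Formula} (h1 : Deriv (m.imp a)) (h2 : Deriv (m.imp b)) :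
    Deriv (m.imp (a.and b)) := by
  refine Deriv.mp (Deriv.mp (dtaut fun v => ?_) h1) h2
  simp only [evalB_imp, evalB]
  cases evalB v m <;> cases evalB v a <;> cases evalB v b <;> rfl

lemma d_imp_top (m : Formula) : Deriv (m.imp Formula.top) := by
  refine dtaut fun v => ?_
  simp only [evalB_imp, evalB_top]
  cases evalB v m <;> rfl

lemma d_imp_conj {m : Formula} {L : List Formula}
    (h : ∀ x ∈ L, Deriv (m.imp x)) : Deriv (m.imp (conjList L)) := by
  induction L with
  | nil => exact d_imp_top m
  | cons x L ih =>
    exact d_imp_and (h x (List.mem_cons_self))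
      (ih fun y hy => h y (List.mem_cons_of_mem _ hy))

lemma d_conj_mono {L M : List Formula} (h : ∀ x ∈ L, x ∈ M) :
    Deriv ((conjList M).imp (conjList L)) :=
  d_imp_conj fun x hx => d_conj_of_mem (h x hx)

/-- Key closure lemma for MCSs. -/
lemma mcs_closed {Γ : Set Formula} (hΓ : MCS Γ) {ψ : Formula} (L : List Formula)
    (hL : ∀ φ ∈ L, φ ∈ Γ) (hd : Deriv ((conjList L).imp ψ)) : ψ ∈ Γ := by
  have hcons : ConsistentSet (insert ψ Γ) := by
    intro M hM hder
    have hψM' : Deriv ((conjList (M.filter (· ≠ ψ) ++ L)).imp ψ) :=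
      d_trans (d_conj_mono fun x hx => List.mem_append_right _ hx) hd
    refine hΓ.1 (M.filter (· ≠ ψ) ++ L) ?_ ?_
    · intro x hx
      rcases List.mem_append.mp hx with hx | hx
      · have h2 := List.mem_filter.mp hx
        rcases hM x h2.1 with h | h
        · exact absurd h (by simpa using h2.2)
        · exact h
      · exact hL x hx
    · refine d_mt (d_imp_conj fun x hx => ?_) hder
      by_cases hxψ : x = ψ
      · exact hxψ ▸ hψM'
      · exact d_conj_of_mem (List.mem_append_left _
          (List.mem_filter.mpr ⟨hx, by simpa using hxψ⟩))
  have heq := hΓ.2 _ hcons (Set.subset_insert _ _)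
  exact heq ▸ Set.mem_insert _ _

lemma mem_of_deriv {Γ : Set Formula} (hΓ : MCS Γ) {φ : Formula} (h : Deriv φ) :
    φ ∈ Γ :=
  mcs_closed hΓ [] (by simp) (d_imp_of _ h)

lemma mcs_mp {Γ : Set Formula} (hΓ : MCS Γ) {φ ψ : Formula}
    (h1 : φ.imp ψ ∈ Γ) (h2 : φ ∈ Γ) : ψ ∈ Γ := by
  refine mcs_closed hΓ [φ.imp ψ, φ] (by simp [h1, h2]) (dtaut fun v => ?_)
  simp only [conjList, evalB_imp, evalB, Formula.top, Formula.falsum]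
  cases evalB v φ <;> cases evalB v ψ <;> simp

lemma mcs_mp2 {Γ : Set Formula} (hΓ : MCS Γ) {A B C : Formula}
    (h : (A.and B).imp C ∈ Γ) (hA : A ∈ Γ) (hB : B ∈ Γ) : C ∈ Γ := by
  have hab : A.and B ∈ Γ := by
    refine mcs_closed hΓ [A, B] (by simp [hA, hB]) (dtaut fun v => ?_)
    simp only [conjList, evalB_imp, evalB, Formula.top, Formula.falsum]
    cases evalB v A <;> cases evalB v B <;> simp
  exact mcs_mp hΓ h hab

lemma mcs_not_both {Γ : Set Formula} (hΓ : MCS Γ) {φ : Formula}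
    (h1 : φ ∈ Γ) (h2 : φ.neg ∈ Γ) : False := by
  refine hΓ.1 [φ, φ.neg] (by simp [h1, h2]) (dtaut fun v => ?_)
  simp only [conjList, evalB, Formula.top, Formula.falsum]
  cases evalB v φ <;> simp

lemma mcs_neg_of_not_mem {Γ : Set Formula} (hΓ : MCS Γ) {φ : Formula}
    (h : φ ∉ Γ) : φ.neg ∈ Γ := by
  have hcons : ConsistentSet (insert φ.neg Γ) := by
    intro M hM hder
    set M' := M.filter (· ≠ φ.neg) with hM'def
    have hM' : ∀ x ∈ M', x ∈ Γ := by
      intro x hx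
      have h2 := List.mem_filter.mp hx
      rcases hM x h2.1 with h3 | h3
      · exact absurd h3 (by simpa using h2.2)
      · exact h3
    have h1 : Deriv ((conjList (φ.neg :: M')).imp (conjList M)) := by
      refine d_conj_mono fun x hx => ?_
      by_cases hxφ : x = φ.neg
      · exact hxφ ▸ List.mem_cons_self
      · exact List.mem_cons_of_mem _ (List.mem_filter.mpr ⟨hx, by simpa using hxφ⟩)
    have h2 : Deriv (conjList (φ.neg :: M')).neg := d_mt h1 hder
    have h3 : Deriv ((conjList M').imp φ) := by
      refine Deriv.mp (dtaut fun v => ?_) h2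
      simp only [conjList, evalB_imp, evalB]
      cases evalB v φ <;> cases evalB v (conjList M') <;> rfl
    exact h (mcs_closed hΓ M' hM' h3)
  have heq := hΓ.2 _ hcons (Set.subset_insert _ _)
  exact heq ▸ Set.mem_insert _ _

lemma lindenbaum {Γ0 : Set Formula} (h : ConsistentSet Γ0) :
    ∃ Δ, MCS Δ ∧ Γ0 ⊆ Δ := by
  have hb : ∀ c ⊆ {Δ | ConsistentSet Δ}, IsChain (· ⊆ ·) c → c.Nonempty →
      ∃ ub ∈ {Δ | ConsistentSet Δ}, ∀ s ∈ c, s ⊆ ub := by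
    intro c hc hchain hne
    refine ⟨⋃₀ c, ?_, fun s hs => Set.subset_sUnion_of_mem hs⟩
    intro L hL hder
    have : ∃ s ∈ c, ∀ φ ∈ L, φ ∈ s := by
      clear hder
      induction L with
      | nil => exact ⟨hne.choose, hne.choose_spec, by simp⟩
      | cons x L ih =>
        obtain ⟨s, hs, hLs⟩ := ih fun φ hφ => hL φ (List.mem_cons_of_mem _ hφ)
        obtain ⟨t, ht, hxt⟩ := hL x (List.mem_cons_self)
        rcases eq_or_ne s t with rfl | hst
        · exact ⟨s, hs, fun φ hφ => by
            rcases List.mem_cons.mp hφ with rfl | hφ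
            exacts [hxt, hLs _ hφ]⟩
        rcases hchain hs ht hst with h1 | h1
        · exact ⟨t, ht, fun φ hφ => by
            rcases List.mem_cons.mp hφ with rfl | hφ
            exacts [hxt, h1 (hLs _ hφ)]⟩
        · exact ⟨s, hs, fun φ hφ => by
            rcases List.mem_cons.mp hφ with rfl | hφ
            exacts [h1 hxt, hLs _ hφ]⟩
    obtain ⟨s, hs, hLs⟩ := this
    exact hc hs L hLs hder
  obtain ⟨m, hsub, hm⟩ := zorn_subset_nonempty {Δ | ConsistentSet Δ} hb Γ0 h
  exact ⟨m, ⟨hm.1, fun Δ hΔ hmΔ => Set.Subset.antisymm (hm.2 hΔ hmΔ) hmΔ⟩, hsub⟩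

lemma mcs_U_and {Γ : Set Formula} (hΓ : MCS Γ) {x c : Formula}
    (hx : Formula.U x ∈ Γ) (hc : Formula.U c ∈ Γ) : Formula.U (x.and c) ∈ Γ := by
  have h1 : Formula.U (x.imp (c.imp (x.and c))) ∈ Γ := by
    refine mem_of_deriv hΓ (Deriv.necU (dtaut fun v => ?_))
    simp only [evalB_imp, evalB]
    cases evalB v x <;> cases evalB v c <;> rfl
  have h2 : Formula.U (c.imp (x.and c)) ∈ Γ :=
    mcs_mp2 hΓ (mem_of_deriv hΓ (Deriv.distU x (c.imp (x.and c)))) hx h1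
  exact mcs_mp2 hΓ (mem_of_deriv hΓ (Deriv.distU c (x.and c))) hc h2

lemma mcs_U_conj {Γ : Set Formula} (hΓ : MCS Γ) (L : List Formula)
    (h : ∀ x ∈ L, Formula.U x ∈ Γ) : Formula.U (conjList L) ∈ Γ := by
  induction L with
  | nil =>
    refine mem_of_deriv hΓ (Deriv.necU (dtaut fun v => ?_))
    simp [conjList, Formula.top, Formula.falsum, evalB]
  | cons x L ih =>
    exact mcs_U_and hΓ (h x (List.mem_cons_self))
      (ih fun y hy => h y (List.mem_cons_of_mem _ hy))

end SKHMAux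
-- AUX END

/-- if `a = ⟨ψ',⊥,φ'⟩ ∈ Σ_Γ` is executable at every `ψ`-state of
the canonical model, then `U(ψ → ψ') ∈ Γ`. -/
theorem IMPinHead (Γ : Set Formula) (hΓ : MCS Γ)
    (a : {a : CanAct // a ∈ SigmaGamma Γ}) (ψ' φ' : Formula)
    (ha : a.1 = CanAct.one ψ' φ') (ψ : Formula)
    (hexec : ∀ w : (canonicalModel Γ).S, ψ ∈ w.1.1 →
      ∃ w', (canonicalModel Γ).R a w w') :
    Formula.U (ψ.imp ψ') ∈ Γ := by
  classical
  by_contra hU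
  have hcons : ConsistentSet ({θ | Formula.U θ ∈ Γ} ∪ {ψ.and ψ'.neg}) := by
    intro L hL hder
    apply hU
    set L' := L.filter (· ≠ ψ.and ψ'.neg) with hL'def
    have hL' : ∀ x ∈ L', Formula.U x ∈ Γ := by
      intro x hx
      have h2 := List.mem_filter.mp hx
      rcases hL x h2.1 with h | h
      · exact h
      · exact absurd h (by simpa using h2.2)
    have h1 : Deriv ((conjList (ψ.and ψ'.neg :: L')).imp (conjList L)) := by
      refine SKHMAux.d_conj_mono fun x hx => ?_
      by_cases hxχ : x = ψ.and ψ'.neg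
      · exact hxχ ▸ List.mem_cons_self
      · exact List.mem_cons_of_mem _ (List.mem_filter.mpr ⟨hx, by simpa using hxχ⟩)
    have h2 : Deriv (conjList (ψ.and ψ'.neg :: L')).neg := SKHMAux.d_mt h1 hder
    have h3 : Deriv ((conjList L').imp (ψ.imp ψ')) := by
      refine Deriv.mp (SKHMAux.dtaut fun v => ?_) h2
      simp only [conjList, SKHMAux.evalB_imp, evalB]
      cases evalB v ψ <;> cases evalB v ψ' <;> cases evalB v (conjList L') <;> rfl
    have h4 : Formula.U (conjList L') ∈ Γ := SKHMAux.mcs_U_conj hΓ _ hL'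
    have h5 : Formula.U ((conjList L').imp (ψ.imp ψ')) ∈ Γ :=
      SKHMAux.mem_of_deriv hΓ (Deriv.necU h3)
    exact SKHMAux.mcs_mp2 hΓ
      (SKHMAux.mem_of_deriv hΓ (Deriv.distU (conjList L') (ψ.imp ψ'))) h4 h5
  obtain ⟨Δ, hΔ, hsub⟩ := SKHMAux.lindenbaum hcons
  have hUsub : ∀ θ, Formula.U θ ∈ Γ → θ ∈ Δ := fun θ h => hsub (Or.inl h)
  have hχΔ : ψ.and ψ'.neg ∈ Δ := hsub (Or.inr rfl)
  have hψΔ : ψ ∈ Δ := by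
    refine SKHMAux.mcs_closed hΔ [ψ.and ψ'.neg] (by simp [hχΔ])
      (SKHMAux.dtaut fun v => ?_)
    simp only [conjList, SKHMAux.evalB_imp, evalB, Formula.top, Formula.falsum]
    cases evalB v ψ <;> cases evalB v ψ' <;> simp
  have hnψ'Δ : ψ'.neg ∈ Δ := by
    refine SKHMAux.mcs_closed hΔ [ψ.and ψ'.neg] (by simp [hχΔ])
      (SKHMAux.dtaut fun v => ?_)
    simp only [conjList, SKHMAux.evalB_imp, evalB, Formula.top, Formula.falsum]
    cases evalB v ψ <;> cases evalB v ψ' <;> simp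
  have hkhm : khmPart Δ = khmPart Γ := by
    ext θ
    constructor
    · rintro ⟨hθ, p, o, q, rfl⟩
      refine ⟨?_, p, o, q, rfl⟩
      by_contra hn
      have hneg : (Formula.khm p o q).neg ∈ Γ := SKHMAux.mcs_neg_of_not_mem hΓ hn
      have hUn : Formula.U (Formula.khm p o q).neg ∈ Γ :=
        SKHMAux.mcs_mp hΓ (SKHMAux.mem_of_deriv hΓ (Deriv.fiveKhmU p o q)) hneg
      exact SKHMAux.mcs_not_both hΔ hθ (hUsub _ hUn)
    · rintro ⟨hθ, p, o, q, rfl⟩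
      exact ⟨hUsub _ (SKHMAux.mcs_mp hΓ
        (SKHMAux.mem_of_deriv hΓ (Deriv.fourKhmU p o q)) hθ), p, o, q, rfl⟩
  have htop : Formula.top ∈ Δ :=
    SKHMAux.mem_of_deriv hΔ (SKHMAux.dtaut fun v => SKHMAux.evalB_top v)
  have hKTT : Formula.khm Formula.top Formula.falsum Formula.top ∈ Γ := by
    have hU1 : Formula.U (Formula.top.imp Formula.top) ∈ Γ :=
      SKHMAux.mem_of_deriv hΓ (Deriv.necU (SKHMAux.dtaut fun v => by
        simp [SKHMAux.evalB_imp]))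
    exact SKHMAux.mcs_mp hΓ (SKHMAux.mem_of_deriv hΓ
      (Deriv.empKhm Formula.top Formula.top)) hU1
  have hw : ((Δ, (Formula.top, Formula.top)) : Set Formula × Formula × Formula)
      ∈ CanStates Γ := by
    exact ⟨⟨hΔ, hkhm⟩, htop, Or.inr (Or.inl ⟨Formula.top, Formula.top, rfl, hKTT⟩)⟩
  obtain ⟨w', hw'⟩ := hexec ⟨_, hw⟩ hψΔ
  have hψ'Δ : ψ' ∈ Δ := by
    simp only [canonicalModel, ha] at hw'
    exact hw'.1
  exact SKHMAux.mcs_not_both hΔ hψ'Δ hnψ'Δ
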